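/- Let R be a commutative ring, ε ∈ R with ε² = 1, S an associative R-algebra, and Q₀, Q₁, Q₂, Q₃ ∈ S satisfying the A1_ε relations. With b₀ = 1, b₁ = ε, b₂ = b₃ = 1, phase P(μ,ν) = −1 if μ ≠ ν and μ,ν ∈ {1,2,3} and P(μ,ν) = 1 otherwise, c := Q₀² + ε·Q₁² + Q₂² + Q₃², and y := c − Q₀², one has: Σ_{μ,ν∈{0,1,2,3}} P(μ,ν) · b_μ b_ν · Q_μ Q_ν Q_μ Q_ν = c² − ε·y. -/

import Mathlib

/-- Diagonal entries `b₀ = 1, b₁ = ε, b₂ = b₃ = 1` of the inverse bilinear form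
`C = diag(1,ε,1,1)` of `A1_ε`. -/
def bC {R : Type*} [CommRing R] (ε : R) : Fin 4 → R := ![1, ε, 1, 1]

/-- Grading phase: `P(μ,ν) = −1` if `μ ≠ ν` and both `μ, ν ∈ {1,2,3}`,
otherwise `P(μ,ν) = 1`. -/
def phC {R : Type*} [CommRing R] (μ ν : Fin 4) : R :=
  if μ ≠ ν ∧ μ ≠ 0 ∧ ν ≠ 0 then -1 else 1

/-- **Weight of the order-2 chord diagram with two crossing chords:**
`Σ_{μ,ν} P(μ,ν)·b_μ b_ν·Q_μ Q_ν Q_μ Q_ν = c² − ε·y` where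
`c = Q₀² + ε·Q₁² + Q₂² + Q₃²` and `y = c − Q₀²`. -/
theorem A1eps_crossing_weight
    {R : Type*} [CommRing R] {S : Type*} [Ring S] [Algebra R S]
    (ε : R) (hε : ε ^ 2 = 1)
    (Q : Fin 4 → S)
    (h01 : Q 0 * Q 1 = Q 1 * Q 0)
    (h02 : Q 0 * Q 2 = Q 2 * Q 0)
    (h03 : Q 0 * Q 3 = Q 3 * Q 0)
    (h12 : Q 1 * Q 2 + Q 2 * Q 1 = Q 3)
    (h23 : Q 2 * Q 3 + Q 3 * Q 2 = ε • Q 1)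
    (h31 : Q 3 * Q 1 + Q 1 * Q 3 = Q 2) :
    (∑ μ : Fin 4, ∑ ν : Fin 4,
        (phC (R := R) μ ν * (bC ε μ * bC ε ν)) • (Q μ * Q ν * Q μ * Q ν))
      = (Q 0 ^ 2 + ε • Q 1 ^ 2 + Q 2 ^ 2 + Q 3 ^ 2) ^ 2
        - ε • ((Q 0 ^ 2 + ε • Q 1 ^ 2 + Q 2 ^ 2 + Q 3 ^ 2) - Q 0 ^ 2) := by
  -- abbreviation lemmas
  have c01 : Q 0 * Q 1 * Q 0 * Q 1 = Q 0 * Q 0 * (Q 1 * Q 1) := by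
    rw [mul_assoc (Q 0) (Q 1) (Q 0), ← h01]; noncomm_ring
  have c10 : Q 1 * Q 0 * Q 1 * Q 0 = Q 1 * Q 1 * (Q 0 * Q 0) := by
    rw [mul_assoc (Q 1) (Q 0) (Q 1), h01]; noncomm_ring
  have c02 : Q 0 * Q 2 * Q 0 * Q 2 = Q 0 * Q 0 * (Q 2 * Q 2) := by
    rw [mul_assoc (Q 0) (Q 2) (Q 0), ← h02]; noncomm_ring
  have c20 : Q 2 * Q 0 * Q 2 * Q 0 = Q 2 * Q 2 * (Q 0 * Q 0) := by
    rw [mul_assoc (Q 2) (Q 0) (Q 2), h02]; noncomm_ring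
  have c03 : Q 0 * Q 3 * Q 0 * Q 3 = Q 0 * Q 0 * (Q 3 * Q 3) := by
    rw [mul_assoc (Q 0) (Q 3) (Q 0), ← h03]; noncomm_ring
  have c30 : Q 3 * Q 0 * Q 3 * Q 0 = Q 3 * Q 3 * (Q 0 * Q 0) := by
    rw [mul_assoc (Q 3) (Q 0) (Q 3), h03]; noncomm_ring
  have d0 : Q 0 * Q 0 * Q 0 * Q 0 = Q 0 * Q 0 * (Q 0 * Q 0) := by noncomm_ring
  have d1 : Q 1 * Q 1 * Q 1 * Q 1 = Q 1 * Q 1 * (Q 1 * Q 1) := by noncomm_ring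
  have d2 : Q 2 * Q 2 * Q 2 * Q 2 = Q 2 * Q 2 * (Q 2 * Q 2) := by noncomm_ring
  have d3 : Q 3 * Q 3 * Q 3 * Q 3 = Q 3 * Q 3 * (Q 3 * Q 3) := by noncomm_ring
  have E12 : Q 1 * Q 2 * Q 1 * Q 2 = Q 1 * Q 3 * Q 2 - Q 1 * Q 1 * (Q 2 * Q 2) := by
    rw [← h12]; noncomm_ring
  have E21 : Q 2 * Q 1 * Q 2 * Q 1 = Q 2 * Q 3 * Q 1 - Q 2 * Q 2 * (Q 1 * Q 1) := by
    rw [← h12]; noncomm_ring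
  have E23 : Q 2 * Q 3 * Q 2 * Q 3 = Q 2 * (ε • Q 1) * Q 3 - Q 2 * Q 2 * (Q 3 * Q 3) := by
    rw [← h23]; noncomm_ring
  have E32 : Q 3 * Q 2 * Q 3 * Q 2 = Q 3 * (ε • Q 1) * Q 2 - Q 3 * Q 3 * (Q 2 * Q 2) := by
    rw [← h23]; noncomm_ring
  have E31 : Q 3 * Q 1 * Q 3 * Q 1 = Q 3 * Q 2 * Q 1 - Q 3 * Q 3 * (Q 1 * Q 1) := by
    rw [← h31]; noncomm_ring
  have E13 : Q 1 * Q 3 * Q 1 * Q 3 = Q 1 * Q 2 * Q 3 - Q 1 * Q 1 * (Q 3 * Q 3) := by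
    rw [← h31]; noncomm_ring
  have G1 : Q 1 * Q 3 * Q 2 = Q 1 * (ε • Q 1) - Q 1 * Q 2 * Q 3 := by
    rw [← h23]; noncomm_ring
  have G2 : Q 2 * Q 3 * Q 1 = Q 2 * Q 2 - Q 2 * Q 1 * Q 3 := by
    rw [← h31]; noncomm_ring
  have G3' : Q 3 * Q 1 * Q 2 = Q 3 * Q 3 - Q 3 * Q 2 * Q 1 := by
    rw [← h12]; noncomm_ring
  have G3 : Q 3 * (ε • Q 1) * Q 2 = ε • (Q 3 * Q 3) - ε • (Q 3 * Q 2 * Q 1) := by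
    rw [mul_smul_comm, smul_mul_assoc, G3', smul_sub]
  have G4 : Q 2 * (ε • Q 1) * Q 3 = ε • (Q 2 * Q 1 * Q 3) := by
    rw [mul_smul_comm, smul_mul_assoc]
  simp only [Fin.sum_univ_four, phC, bC, Matrix.cons_val]
  simp (config := { decide := true }) only [ne_eq]
  norm_num
  rw [c01, c10, c02, c20, c03, c30, d0, d1, d2, d3, E12, E21, E23, E32, E31, E13,
    G1, G2, G3, G4]
  simp only [pow_two]
  rw [show ∀ A B C D : S, (A + B + C + D) * (A + B + C + D)
      = A*A + A*B + A*C + A*D + B*A + B*B + B*C + B*D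
        + C*A + C*B + C*C + C*D + D*A + D*B + D*C + D*D from
      fun A B C D => by noncomm_ring]
  simp only [smul_mul_assoc, mul_smul_comm, smul_smul, smul_sub, smul_add, mul_sub, sub_mul]
  module
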